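/- Any two consecutive words of the list L_n have Hamming distance exactly 1, i.e., they differ in exactly one position. -/

import Mathlib

def lastD (w : List Nat) : Nat := w.getLastD 0

/-- Shifted production for the Catalan rule:
`sC k 2 = [2, k+1, k, ..., 3]` and, for `3 ≤ i ≤ k+1`,
`sC k i = [i, i+1, ..., k+1, 2, 3, ..., i-1]`. -/
def sC (k i : Nat) : List Nat :=
  if i = 2 then 2 :: (List.range (k - 1)).map (fun t => k + 1 - t)
  else (List.range (k + 2 - i)).map (fun t => i + t) ++
       (List.range (i - 2)).map (fun t => 2 + t)

/-- Builds the sublists `L_n^i` from the previous level, carrying the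
starting digit of the next shifted production. -/
def graySubsAux : Nat → List (List Nat) → List (List (List Nat))
  | _, [] => []
  | j, w :: ws =>
    let sub := (sC (lastD w) j).map (fun d => w ++ [d])
    sub :: graySubsAux (lastD (sub.getLastD [])) ws

def graySubs (prev : List (List Nat)) : List (List (List Nat)) :=
  graySubsAux 2 prev

/-- The Gray code list `L_n` for the Catalan succession rule. -/
def grayL : Nat → List (List Nat)
  | 0 => []
  | 1 => [[2]]
  | n + 2 => (graySubs (grayL (n + 1))).flatten

/-- Hamming distance: number of positions where two words differ. -/
def hamming {α : Type*} [DecidableEq α] (v w : List α) : Nat :=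
  ((v.zip w).filter (fun p => decide (p.1 ≠ p.2))).length

/- ======================= auxiliary material ======================= -/

abbrev Ham (v w : List Nat) : Prop := hamming v w = 1

lemma hamming_self {α : Type*} [DecidableEq α] (v : List α) : hamming v v = 0 := by
  induction v with
  | nil => rfl
  | cons a l ih => simpa [hamming, List.zip_cons_cons] using ih

lemma hamming_concat {α : Type*} [DecidableEq α] (v w : List α) (a b : α)
    (h : v.length = w.length) :
    hamming (v ++ [a]) (w ++ [b]) = hamming v w + (if a = b then 0 else 1) := by
  unfold hamming
  rw [List.zip_append h, List.filter_append, List.length_append]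
  congr 1
  by_cases hab : a = b <;> simp [hab]

lemma lastD_concat (w : List Nat) (d : Nat) : lastD (w ++ [d]) = d := by
  simp [lastD]

lemma getLast?_eq_getLastD {α : Type*} (l : List α) (h : l ≠ []) (a : α) :
    l.getLast? = some (l.getLastD a) := by
  rcases l.eq_nil_or_concat with rfl | ⟨L, b, rfl⟩
  · exact absurd rfl h
  · simp

lemma getLastD_map {α β : Type*} (f : α → β) (l : List α) (hl : l ≠ []) (a : α) (b : β) :
    (l.map f).getLastD b = f (l.getLastD a) := by
  rcases l.eq_nil_or_concat with rfl | ⟨L, c, rfl⟩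
  · exact absurd rfl hl
  · simp

lemma sC_two (k : Nat) : sC k 2 = 2 :: (List.range (k - 1)).map (fun t => k + 1 - t) := by
  simp [sC]

lemma joinc {α : Type*} (a : List α) (L : List (List α)) :
    (a :: L).flatten = a ++ L.flatten := rfl

lemma sC_three (k : Nat) :
    sC k 3 = (List.range (k - 1)).map (fun t => 3 + t) ++ [2] := by
  have h1 : k + 2 - 3 = k - 1 := by omega
  have h2 : (List.range (3 - 2)).map (fun t => 2 + t) = [2] := by decide
  rw [sC, if_neg (by omega), h1, h2]

lemma sC_ne_nil (k j : Nat) (hj : j = 2 ∨ j = 3) : sC k j ≠ [] := by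
  rcases hj with rfl | rfl
  · rw [sC_two]; simp
  · rw [sC_three]; simp

lemma sC_two_head (k : Nat) : (sC k 2).head? = some 2 := by
  rw [sC_two]; rfl

lemma sC_three_head (k : Nat) (hk : 2 ≤ k) : (sC k 3).head? = some 3 := by
  obtain ⟨m, rfl⟩ : ∃ m, k = m + 2 := ⟨k - 2, by omega⟩
  rw [sC_three]
  have : m + 2 - 1 = m + 1 := by omega
  rw [this, List.range_succ_eq_map]
  simp

lemma sC_two_last (k : Nat) (hk : 2 ≤ k) : (sC k 2).getLastD 0 = 3 := by
  obtain ⟨m, rfl⟩ : ∃ m, k = m + 2 := ⟨k - 2, by omega⟩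
  rw [sC_two]
  have h1 : m + 2 - 1 = m + 1 := by omega
  rw [h1, List.range_succ, List.map_append, List.map_cons, List.map_nil,
      show m + 2 + 1 - m = 3 from by omega, ← List.cons_append, List.getLastD_concat]

lemma sC_three_last (k : Nat) : (sC k 3).getLastD 0 = 2 := by
  rw [sC_three, List.getLastD_concat]

lemma sC_mem_ge (k j : Nat) (hj : j = 2 ∨ j = 3) : ∀ d ∈ sC k j, 2 ≤ d := by
  rcases hj with rfl | rfl <;> intro d hd
  · rw [sC_two] at hd
    rcases List.mem_cons.1 hd with h | h
    · omega
    · obtain ⟨t, ht, rfl⟩ := List.mem_map.1 h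
      rw [List.mem_range] at ht; omega
  · rw [sC_three] at hd
    rcases List.mem_append.1 hd with h | h
    · obtain ⟨t, ht, rfl⟩ := List.mem_map.1 h; omega
    · simp at h; omega

lemma sC_nodup (k j : Nat) (hj : j = 2 ∨ j = 3) : (sC k j).Nodup := by
  rcases hj with rfl | rfl
  · rw [sC_two, List.nodup_cons]
    constructor
    · intro h
      obtain ⟨t, ht, h2⟩ := List.mem_map.1 h
      rw [List.mem_range] at ht; omega
    · refine List.Nodup.map_on ?_ List.nodup_range
      intro x hx y hy hxy
      rw [List.mem_range] at hx hy; omega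
  · rw [sC_three]
    refine List.Nodup.append ?_ (List.nodup_singleton 2) ?_
    · refine List.Nodup.map_on ?_ List.nodup_range
      intro x hx y hy hxy
      rw [List.mem_range] at hx hy; omega
    · intro a ha hb
      simp only [List.mem_singleton] at hb
      obtain ⟨t, ht, rfl⟩ := List.mem_map.1 ha
      omega

lemma sC_chain (k j : Nat) (hj : j = 2 ∨ j = 3) : List.Chain' (· ≠ ·) (sC k j) :=
  List.Pairwise.isChain (sC_nodup k j hj)

lemma aux (m : Nat) (prev : List (List Nat)) : ∀ (j : Nat),
    (j = 2 ∨ j = 3) →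
    (∀ w ∈ prev, w.length = m) →
    (∀ w ∈ prev, 2 ≤ lastD w) →
    List.Chain' Ham prev →
    (∀ w ∈ (graySubsAux j prev).flatten, w.length = m + 1) ∧
    (∀ w ∈ (graySubsAux j prev).flatten, 2 ≤ lastD w) ∧
    List.Chain' Ham (graySubsAux j prev).flatten ∧
    (graySubsAux j prev).flatten.head? = prev.head?.map (fun w => w ++ [j]) := by
  induction prev with
  | nil => intro j _ _ _ _; simp [graySubsAux]; exact List.IsChain.nil
  | cons w ws ih =>
    intro j hj hlen hlast hch
    have hk : 2 ≤ lastD w := hlast w List.mem_cons_self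
    have hne : sC (lastD w) j ≠ [] := sC_ne_nil _ _ hj
    have hsublast : ((sC (lastD w) j).map (fun d => w ++ [d])).getLastD [] =
        w ++ [(sC (lastD w) j).getLastD 0] := getLastD_map _ _ hne 0 []
    have hj'val : lastD (((sC (lastD w) j).map (fun d => w ++ [d])).getLastD []) =
        (sC (lastD w) j).getLastD 0 := by rw [hsublast, lastD_concat]
    set j' : Nat := (sC (lastD w) j).getLastD 0 with hj'def
    have hj' : j' = 2 ∨ j' = 3 := by
      rcases hj with rfl | rfl
      · exact Or.inr (sC_two_last _ hk)
      · exact Or.inl (sC_three_last _)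
    have hunfold : graySubsAux j (w :: ws) =
        ((sC (lastD w) j).map (fun d => w ++ [d])) :: graySubsAux j' ws := by
      rw [graySubsAux, hj'val]
    obtain ⟨ih1, ih2, ih3, ih4⟩ := ih j' hj'
      (fun v hv => hlen v (List.mem_cons_of_mem _ hv))
      (fun v hv => hlast v (List.mem_cons_of_mem _ hv))
      (List.isChain_cons.1 hch).2
    rw [hunfold, joinc]
    have hwlen : w.length = m := hlen w List.mem_cons_self
    refine ⟨?_, ?_, ?_, ?_⟩
    · intro v hv
      rcases List.mem_append.1 hv with h | h
      · obtain ⟨d, _, rfl⟩ := List.mem_map.1 h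
        simp [hwlen]
      · exact ih1 v h
    · intro v hv
      rcases List.mem_append.1 hv with h | h
      · obtain ⟨d, hd, rfl⟩ := List.mem_map.1 h
        rw [lastD_concat]
        exact sC_mem_ge _ _ hj d hd
      · exact ih2 v h
    · refine List.IsChain.append ?_ ih3 ?_
      · rw [List.isChain_map]
        refine (sC_chain (lastD w) j hj).imp ?_
        intro a b hab
        show hamming (w ++ [a]) (w ++ [b]) = 1
        rw [hamming_concat _ _ _ _ rfl, hamming_self, if_neg hab]
      · intro x hx y hy
        rw [ih4] at hy
        cases ws with
        | nil => simp at hy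
        | cons w₁ ws' =>
          have hyeq : y = w₁ ++ [j'] := by
            simp only [List.head?_cons, Option.map_some, Option.mem_def,
              Option.some_inj] at hy
            exact hy.symm
          have hxeq : x = w ++ [j'] := by
            rw [getLast?_eq_getLastD _ (by simpa using hne) [], hsublast,
              Option.mem_def, Option.some_inj] at hx
            exact hx.symm
          subst hyeq hxeq
          show hamming (w ++ [j']) (w₁ ++ [j']) = 1
          have hww₁ : Ham w w₁ := (List.isChain_cons.1 hch).1 w₁ rfl
          rw [hamming_concat _ _ _ _ (by
              rw [hwlen, hlen w₁ (List.mem_cons_of_mem _ List.mem_cons_self)]),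
            if_pos rfl]
          simpa using hww₁
    · rw [List.head?_append]
      have hhead : ((sC (lastD w) j).map (fun d => w ++ [d])).head? = some (w ++ [j]) := by
        rw [List.head?_map]
        rcases hj with rfl | rfl
        · rw [sC_two_head]; rfl
        · rw [sC_three_head _ hk]; rfl
      rw [hhead]
      rfl

lemma grayL_props (n : Nat) :
    (∀ w ∈ grayL (n + 1), w.length = n + 1) ∧
    (∀ w ∈ grayL (n + 1), 2 ≤ lastD w) ∧
    List.Chain' Ham (grayL (n + 1)) := by
  induction n with
  | zero =>
    refine ⟨?_, ?_, ?_⟩ <;> simp [grayL, lastD]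
    exact List.isChain_singleton _
  | succ n ih =>
    obtain ⟨h1, h2, h3⟩ := ih
    obtain ⟨g1, g2, g3, _⟩ := aux (n + 1) (grayL (n + 1)) 2 (Or.inl rfl) h1 h2 h3
    exact ⟨g1, g2, g3⟩

/-- Any two consecutive words of `L_n` have Hamming distance exactly 1. -/
theorem stmt5 (n : Nat) (hn : 1 ≤ n) (i : Nat) (hi : i + 1 < (grayL n).length) :
    hamming ((grayL n).getD i []) ((grayL n).getD (i + 1) []) = 1 := by
  obtain ⟨m, rfl⟩ : ∃ m, n = m + 1 := ⟨n - 1, by omega⟩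
  have hch := (grayL_props m).2.2
  have h := List.isChain_iff_getElem.1 hch i (by omega)
  rw [List.getD_eq_getElem _ _ (by omega), List.getD_eq_getElem _ _ hi]
  exact h
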